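/- Let H : ℝ → ℝ be a bounded C⁴ function with H(0) = 0, H even, and C_4 := max_{0≤p≤4} sup_η |H^{(p)}(η)| < ∞, with H not identically zero. Then 2 D_1(H, 0) ≤ sup_η |H''(η)| ≤ C_4, and consequently for every a ≥ 0, D_1(H, a) ≥ (2 D_1(H, 0)² / C_4) · 1/(3a² + 4). -/

import Mathlib

open MeasureTheory Real Filter

noncomputable section

/-- `D_N(H,a) = sup_{η ≠ 0} |Σⱼ H(ηⱼ) Γ_{N-1}(η^j)| / (a² + |η|²)`, where
`Γ_{N-1}(η^j) = ∏_{i≠j} e^{-π ηᵢ²}`. -/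
def DN (N : ℕ) (H : ℝ → ℝ) (a : ℝ) : ℝ :=
  ⨆ η : {η : Fin N → ℝ // η ≠ 0},
    |∑ j, H (η.1 j) * ∏ i ∈ Finset.univ.erase j, Real.exp (-Real.pi * (η.1 i) ^ 2)| /
      (a ^ 2 + ∑ i, (η.1 i) ^ 2)

/-- `C₄ = max_{p ≤ 4} sup_η |H⁽ᵖ⁾(η)|`. -/
def derivBound4 (H : ℝ → ℝ) : ℝ :=
  ⨆ p : Fin 5, ⨆ η : ℝ, |iteratedDeriv (p : ℕ) H η|

private lemma itDW_eq {f : ℝ → ℝ} (hf : ContDiff ℝ 4 f) {n : ℕ} (hn : (n : ℕ∞) ≤ 4)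
    {s : Set ℝ} (hs : UniqueDiffOn ℝ s) {y : ℝ} (hy : y ∈ s) :
    iteratedDerivWithin n f s y = iteratedDeriv n f y := by
  have h : HasFTaylorSeriesUpTo (4 : ℕ∞) f (ftaylorSeries ℝ f) :=
    contDiff_iff_ftaylorSeries.mp (by exact_mod_cast hf)
  have h2 := (h.hasFTaylorSeriesUpToOn s).eq_iteratedFDerivWithin_of_uniqueDiffOn
    (by exact_mod_cast hn) hs hy
  rw [iteratedDerivWithin_eq_iteratedFDerivWithin, iteratedDeriv_eq_iteratedFDeriv, ← h2]
  rfl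

private lemma taylor2' {f : ℝ → ℝ} (hf : ContDiff ℝ 4 f) (hf0 : f 0 = 0)
    (hf1 : deriv f 0 = 0) {S : ℝ} (hS : ∀ y, |iteratedDeriv 2 f y| ≤ S)
    {x : ℝ} (hx : 0 < x) : |f x| ≤ S / 2 * x ^ 2 := by
  have hu : UniqueDiffOn ℝ (Set.Icc 0 x) := uniqueDiffOn_Icc hx
  have h0 : (0:ℝ) ∈ Set.Icc 0 x := ⟨le_refl 0, hx.le⟩
  have hcd2 : ContDiffOn ℝ 2 f (Set.Icc 0 x) := (hf.of_le (by norm_num)).contDiffOn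
  have hdiff : DifferentiableOn ℝ (iteratedDerivWithin 1 f (Set.Icc 0 x)) (Set.Ioo 0 x) :=
    fun y hy => ((hcd2.differentiableOn_iteratedDerivWithin (by norm_num) hu) y
      (Set.Ioo_subset_Icc_self hy)).mono Set.Ioo_subset_Icc_self
  have hI : Set.uIcc 0 x = Set.Icc 0 x := Set.uIcc_of_le hx.le
  have hO : Set.uIoo 0 x = Set.Ioo 0 x := Set.uIoo_of_le hx.le
  obtain ⟨x', hx', hT⟩ := taylor_mean_remainder_lagrange (n := 1) hx.ne
    (by rw [hI]; exact hcd2.of_le (by norm_num)) (by rw [hI, hO]; exact hdiff)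
  rw [hI] at hT
  rw [hO] at hx'
  have hd1 : iteratedDerivWithin 1 f (Set.Icc 0 x) 0 = 0 := by
    rw [itDW_eq hf (by norm_num) hu h0, iteratedDeriv_one, hf1]
  have hP : taylorWithinEval f 1 (Set.Icc 0 x) 0 x = 0 := by
    rw [taylor_within_apply]
    simp [Finset.sum_range_succ, hd1, hf0]
  rw [hP, sub_zero] at hT
  have h2 : iteratedDerivWithin (1+1) f (Set.Icc 0 x) x' = iteratedDeriv 2 f x' :=
    itDW_eq hf (by norm_num) hu (Set.Ioo_subset_Icc_self hx')
  rw [hT, h2, sub_zero]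
  have hx2 : (0:ℝ) ≤ x ^ 2 := sq_nonneg x
  have hfac : ((Nat.factorial (1+1) : ℕ) : ℝ) = 2 := by norm_num [Nat.factorial]
  rw [hfac]
  have h1 : |iteratedDeriv 2 f x' * x ^ (1+1) / 2| = |iteratedDeriv 2 f x'| * x ^ 2 / 2 := by
    rw [abs_div, abs_mul]
    norm_num [abs_of_nonneg hx2]
  rw [h1]
  have := mul_le_mul_of_nonneg_right (hS x') hx2
  linarith

private lemma taylor4' {f : ℝ → ℝ} (hf : ContDiff ℝ 4 f) (hf0 : f 0 = 0)
    (hf1 : deriv f 0 = 0) (hf3 : iteratedDeriv 3 f 0 = 0) {S : ℝ}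
    (hS : ∀ y, |iteratedDeriv 4 f y| ≤ S) {x : ℝ} (hx : 0 < x) :
    |f x - iteratedDeriv 2 f 0 * x ^ 2 / 2| ≤ S / 24 * x ^ 4 := by
  have hu : UniqueDiffOn ℝ (Set.Icc 0 x) := uniqueDiffOn_Icc hx
  have h0 : (0:ℝ) ∈ Set.Icc 0 x := ⟨le_refl 0, hx.le⟩
  have hcd4 : ContDiffOn ℝ 4 f (Set.Icc 0 x) := hf.contDiffOn
  have hdiff : DifferentiableOn ℝ (iteratedDerivWithin 3 f (Set.Icc 0 x)) (Set.Ioo 0 x) :=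
    fun y hy => ((hcd4.differentiableOn_iteratedDerivWithin (by norm_num) hu) y
      (Set.Ioo_subset_Icc_self hy)).mono Set.Ioo_subset_Icc_self
  have hI : Set.uIcc 0 x = Set.Icc 0 x := Set.uIcc_of_le hx.le
  have hO : Set.uIoo 0 x = Set.Ioo 0 x := Set.uIoo_of_le hx.le
  obtain ⟨x', hx', hT⟩ := taylor_mean_remainder_lagrange (n := 3) hx.ne
    (by rw [hI]; exact hcd4.of_le (by norm_num)) (by rw [hI, hO]; exact hdiff)
  rw [hI] at hT
  rw [hO] at hx'
  have hd1 : iteratedDerivWithin 1 f (Set.Icc 0 x) 0 = 0 := by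
    rw [itDW_eq hf (by norm_num) hu h0, iteratedDeriv_one, hf1]
  have hd3 : iteratedDerivWithin 3 f (Set.Icc 0 x) 0 = 0 := by
    rw [itDW_eq hf (by norm_num) hu h0, hf3]
  have hd2 : iteratedDerivWithin 2 f (Set.Icc 0 x) 0 = iteratedDeriv 2 f 0 :=
    itDW_eq hf (by norm_num) hu h0
  have hP : taylorWithinEval f 3 (Set.Icc 0 x) 0 x = iteratedDeriv 2 f 0 * x ^ 2 / 2 := by
    rw [taylor_within_apply]
    simp [Finset.sum_range_succ, hd1, hd3, hd2, hf0, Nat.factorial]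
    ring
  rw [hP] at hT
  have h4 : iteratedDerivWithin (3+1) f (Set.Icc 0 x) x' = iteratedDeriv 4 f x' :=
    itDW_eq hf (by norm_num) hu (Set.Ioo_subset_Icc_self hx')
  rw [hT, h4, sub_zero]
  have hx4 : (0:ℝ) ≤ x ^ 4 := by positivity
  have hfac : ((Nat.factorial (3+1) : ℕ) : ℝ) = 24 := by norm_num [Nat.factorial]
  rw [hfac]
  have h1 : |iteratedDeriv 4 f x' * x ^ (3+1) / 24| = |iteratedDeriv 4 f x'| * x ^ 4 / 24 := by
    rw [abs_div, abs_mul]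
    norm_num [abs_of_nonneg hx4]
  rw [h1]
  have := mul_le_mul_of_nonneg_right (hS x') hx4
  linarith

private lemma DN_one (H : ℝ → ℝ) (a : ℝ) :
    DN 1 H a = ⨆ η : {η : Fin 1 → ℝ // η ≠ 0}, |H (η.1 0)| / (a ^ 2 + (η.1 0) ^ 2) := by
  unfold DN
  congr 1
  funext η
  simp

private lemma sub_ne' (η : {η : Fin 1 → ℝ // η ≠ 0}) : η.1 0 ≠ 0 := by
  intro h
  exact η.2 (funext fun i => by rw [Subsingleton.elim i 0]; exact h)

private def mkEta (t : ℝ) (ht : t ≠ 0) : {η : Fin 1 → ℝ // η ≠ 0} :=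
  ⟨fun _ => t, fun h => ht (congrFun h 0)⟩

set_option maxHeartbeats 2000000 in
/-- **Eq. (4.43)**: `2 D₁(H,0) ≤ sup_η |H''(η)| ≤ C₄`, hence
`D₁(H,a) ≥ (2 D₁(H,0)²/C₄) · 1/(3a² + 4)`. -/
theorem D1_lower_bound' (H : ℝ → ℝ) (hC : ContDiff ℝ 4 H)
    (hbdd : ∀ p : Fin 5, BddAbove (Set.range fun η => |iteratedDeriv (p : ℕ) H η|))
    (hH0 : H 0 = 0) (heven : ∀ η, H η = H (-η))
    (hne : ∃ η, H η ≠ 0) :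
    (2 * DN 1 H 0 ≤ ⨆ η : ℝ, |iteratedDeriv 2 H η|) ∧
    ((⨆ η : ℝ, |iteratedDeriv 2 H η|) ≤ derivBound4 H) ∧
    (∀ a : ℝ, 0 ≤ a →
      2 * DN 1 H 0 ^ 2 / derivBound4 H * (1 / (3 * a ^ 2 + 4)) ≤ DN 1 H a) := by
  have h2b : BddAbove (Set.range fun η => |iteratedDeriv 2 H η|) := by
    have := hbdd 2
    simpa [show ((2 : Fin 5) : ℕ) = 2 from rfl] using this
  have h4b : BddAbove (Set.range fun η => |iteratedDeriv 4 H η|) := by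
    have := hbdd 4
    simpa [show ((4 : Fin 5) : ℕ) = 4 from rfl] using this
  set S2 := ⨆ η : ℝ, |iteratedDeriv 2 H η| with hS2def
  set C := derivBound4 H with hCdef
  have hS2 : ∀ y, |iteratedDeriv 2 H y| ≤ S2 := fun y => le_ciSup h2b y
  have hC4 : ∀ p : Fin 5, (⨆ η : ℝ, |iteratedDeriv (p : ℕ) H η|) ≤ C := by
    intro p
    simp only [hCdef, derivBound4]
    exact le_ciSup (f := fun p : Fin 5 => ⨆ η : ℝ, |iteratedDeriv (p : ℕ) H η|)
      (Set.Finite.bddAbove (Set.finite_range _)) p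
  have hS2C : S2 ≤ C := by simpa [show ((2 : Fin 5) : ℕ) = 2 from rfl] using hC4 2
  have hS4 : ∀ y, |iteratedDeriv 4 H y| ≤ C := fun y =>
    (le_ciSup h4b y).trans (by simpa [show ((4 : Fin 5) : ℕ) = 4 from rfl] using hC4 4)
  -- derivatives at 0 vanish by evenness
  have hHneg : (fun x => H (-x)) = H := funext fun x => (heven x).symm
  have hf1 : deriv H 0 = 0 := by
    have h := iteratedDeriv_comp_neg 1 H 0
    rw [hHneg] at h
    simp only [neg_zero, pow_one, neg_smul, one_smul, iteratedDeriv_one] at h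
    linarith
  have hf3 : iteratedDeriv 3 H 0 = 0 := by
    have h := iteratedDeriv_comp_neg 3 H 0
    rw [hHneg] at h
    simp only [neg_zero, smul_eq_mul] at h
    norm_num at h
    linarith
  -- pointwise Taylor bounds
  have key2 : ∀ t : ℝ, |H t| ≤ S2 / 2 * t ^ 2 := by
    intro t
    rcases lt_trichotomy 0 t with h | h | h
    · exact taylor2' hC hH0 hf1 hS2 h
    · rw [← h]
      simp [hH0]
    · have h2 := taylor2' hC hH0 hf1 hS2 (neg_pos.mpr h)
      rw [heven t]
      rwa [neg_sq] at h2
  have key4 : ∀ t : ℝ, |H t - iteratedDeriv 2 H 0 * t ^ 2 / 2| ≤ C / 24 * t ^ 4 := by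
    intro t
    rcases lt_trichotomy 0 t with h | h | h
    · exact taylor4' hC hH0 hf1 hf3 hS4 h
    · rw [← h]
      simp [hH0]
    · have h2 := taylor4' hC hH0 hf1 hf3 hS4 (neg_pos.mpr h)
      rw [heven t]
      have e2 : (-t) ^ 2 = t ^ 2 := neg_sq t
      have e4 : (-t) ^ 4 = t ^ 4 := by ring
      rwa [e2, e4] at h2
  -- boundedness of the DN family
  have hBddA : ∀ b : ℝ, BddAbove (Set.range fun η : {η : Fin 1 → ℝ // η ≠ 0} =>
      |H (η.1 0)| / (b ^ 2 + (η.1 0) ^ 2)) := by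
    intro b
    refine ⟨S2 / 2, ?_⟩
    rintro _ ⟨η, rfl⟩
    have ht : η.1 0 ≠ 0 := sub_ne' η
    have ht2 : 0 < (η.1 0) ^ 2 := by positivity
    have hd : 0 < b ^ 2 + (η.1 0) ^ 2 := by positivity
    calc |H (η.1 0)| / (b ^ 2 + (η.1 0) ^ 2)
        ≤ |H (η.1 0)| / (η.1 0) ^ 2 := by
          apply div_le_div_of_nonneg_left (abs_nonneg _) ht2
          nlinarith [sq_nonneg b]
      _ ≤ S2 / 2 := (div_le_iff₀ ht2).mpr (key2 _)
  haveI : Nonempty {η : Fin 1 → ℝ // η ≠ 0} := ⟨mkEta 1 one_ne_zero⟩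
  -- D ≤ S2 / 2
  have hDle : DN 1 H 0 ≤ S2 / 2 := by
    rw [DN_one]
    apply ciSup_le
    intro η
    have ht : η.1 0 ≠ 0 := sub_ne' η
    have ht2 : 0 < (η.1 0) ^ 2 := by positivity
    have h00 : (0:ℝ) ^ 2 + (η.1 0) ^ 2 = (η.1 0) ^ 2 := by ring
    rw [h00]
    exact (div_le_iff₀ ht2).mpr (key2 _)
  -- D > 0
  have hD_pos : 0 < DN 1 H 0 := by
    obtain ⟨η₁, hη₁⟩ := hne
    have hn1 : η₁ ≠ 0 := fun h => hη₁ (h ▸ hH0)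
    have hv : 0 < |H η₁| / ((0:ℝ) ^ 2 + η₁ ^ 2) := by
      apply div_pos (abs_pos.mpr hη₁)
      positivity
    have h := le_ciSup (hBddA 0) (mkEta η₁ hn1)
    rw [← DN_one] at h
    exact lt_of_lt_of_le hv h
  have hC_pos : 0 < C := by linarith
  have hC2D : 2 * DN 1 H 0 ≤ C := by linarith
  refine ⟨by linarith, hS2C, ?_⟩
  intro a ha
  set D := DN 1 H 0 with hDdef
  have h34 : (0:ℝ) < 3 * a ^ 2 + 4 := by positivity
  -- reduction to a single witness
  have hstep : ∀ t : ℝ, t ≠ 0 →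
      2 * D ^ 2 / C * (1 / (3 * a ^ 2 + 4)) ≤ |H t| / (a ^ 2 + t ^ 2) →
      2 * D ^ 2 / C * (1 / (3 * a ^ 2 + 4)) ≤ DN 1 H a := by
    intro t ht hle
    have h := le_ciSup (hBddA a) (mkEta t ht)
    rw [← DN_one] at h
    exact hle.trans h
  -- near-optimal point for D
  have hlt : D - D / 24 < ⨆ η : {η : Fin 1 → ℝ // η ≠ 0},
      |H (η.1 0)| / ((0:ℝ) ^ 2 + (η.1 0) ^ 2) := by
    rw [← DN_one]
    linarith
  obtain ⟨η₀, hη₀⟩ := exists_lt_of_lt_ciSup hlt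
  have ht₀ : η₀.1 0 ≠ 0 := sub_ne' η₀
  set t₀ := η₀.1 0 with ht₀def
  have ht₀2 : 0 < t₀ ^ 2 := by positivity
  have hH₀ : (D - D / 24) * t₀ ^ 2 ≤ |H t₀| := by
    have h00 : (0:ℝ) ^ 2 + t₀ ^ 2 = t₀ ^ 2 := by ring
    rw [h00] at hη₀
    exact le_of_lt ((lt_div_iff₀ ht₀2).mp hη₀)
  have hLHS : 2 * D ^ 2 / C * (1 / (3 * a ^ 2 + 4)) = 2 * D ^ 2 / (C * (3 * a ^ 2 + 4)) := by
    field_simp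
  by_cases hcase : D / C ≤ t₀ ^ 2
  · -- the near-optimal point is not too close to the origin: use it directly
    apply hstep t₀ ht₀
    have hDC : D ≤ t₀ ^ 2 * C := (div_le_iff₀ hC_pos).mp hcase
    have hden : 0 < a ^ 2 + t₀ ^ 2 := by positivity
    rw [hLHS, div_le_div_iff₀ (by positivity) hden]
    nlinarith [mul_le_mul_of_nonneg_right hH₀ (mul_nonneg hC_pos.le h34.le),
      mul_le_mul_of_nonneg_right hDC (mul_nonneg hD_pos.le (sq_nonneg a)),
      mul_le_mul_of_nonneg_right hC2D (mul_nonneg hD_pos.le ht₀2.le),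
      hD_pos, ht₀2, sq_nonneg a, hC_pos]
  · -- the near-optimal point is close to the origin: use Taylor at a point of order 1
    push_neg at hcase
    have hCx : C * t₀ ^ 2 ≤ D := by
      have := (lt_div_iff₀ hC_pos).mp hcase
      linarith
    set B := |iteratedDeriv 2 H 0| with hBdef
    have habs2 : |iteratedDeriv 2 H 0 * t₀ ^ 2 / 2| = B * t₀ ^ 2 / 2 := by
      rw [abs_div, abs_mul, abs_of_nonneg (sq_nonneg t₀)]
      norm_num
      exact Or.inl hBdef.symm
    have htri : |H t₀| - B * t₀ ^ 2 / 2 ≤ C / 24 * (t₀ ^ 2) ^ 2 := by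
      have h1 := abs_sub_abs_le_abs_sub (H t₀) (iteratedDeriv 2 H 0 * t₀ ^ 2 / 2)
      have h2 := key4 t₀
      rw [habs2] at h1
      have e : t₀ ^ 4 = (t₀ ^ 2) ^ 2 := by ring
      rw [e] at h2
      linarith
    have hB : 11 / 6 * D ≤ B := by
      nlinarith [mul_le_mul_of_nonneg_right hCx ht₀2.le, htri, hH₀, ht₀2, hD_pos]
    -- witness point
    set x₁ := 12 * D / C with hx₁def
    have hx₁pos : 0 < x₁ := by positivity
    set t₁ := Real.sqrt x₁ with ht₁def
    have ht₁sq : t₁ ^ 2 = x₁ := Real.sq_sqrt hx₁pos.le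
    have ht₁ : t₁ ≠ 0 := by
      have := Real.sqrt_pos.mpr hx₁pos
      exact this.ne'
    have hx₁C : C * x₁ = 12 * D := by
      rw [hx₁def]
      field_simp [hC_pos.ne']
    have hx₁6 : x₁ ≤ 6 := by
      rw [hx₁def, div_le_iff₀ hC_pos]
      linarith
    have hlow : 5 / 12 * D * x₁ ≤ |H t₁| := by
      have h1 := abs_sub_abs_le_abs_sub (iteratedDeriv 2 H 0 * t₁ ^ 2 / 2) (H t₁)
      rw [abs_sub_comm] at h1
      have h2 := key4 t₁
      have habs2' : |iteratedDeriv 2 H 0 * t₁ ^ 2 / 2| = B * t₁ ^ 2 / 2 := by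
        rw [abs_div, abs_mul, abs_of_nonneg (sq_nonneg t₁)]
        norm_num
        exact Or.inl hBdef.symm
      rw [habs2'] at h1
      have e : t₁ ^ 4 = (t₁ ^ 2) ^ 2 := by ring
      rw [e, ht₁sq] at h2
      rw [ht₁sq] at h1
      have hCx₁2 : C * x₁ ^ 2 = 12 * D * x₁ := by
        rw [pow_two, ← mul_assoc, hx₁C]
      have hBx₁ : 11 / 6 * D * x₁ ≤ B * x₁ :=
        mul_le_mul_of_nonneg_right hB hx₁pos.le
      linarith [h1, h2, hCx₁2, hBx₁]
    apply hstep t₁ ht₁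
    have ht₁2 : 0 < t₁ ^ 2 := ht₁sq ▸ hx₁pos
    have hden : 0 < a ^ 2 + t₁ ^ 2 := add_pos_of_nonneg_of_pos (sq_nonneg a) ht₁2
    rw [hLHS, div_le_div_iff₀ (mul_pos hC_pos h34) hden]
    rw [ht₁sq]
    have h5 : 5 / 12 * D * x₁ * (C * (3 * a ^ 2 + 4)) ≤ |H t₁| * (C * (3 * a ^ 2 + 4)) :=
      mul_le_mul_of_nonneg_right hlow (mul_pos hC_pos h34).le
    have he : 5 / 12 * D * x₁ * (C * (3 * a ^ 2 + 4)) = 5 * D * (C * x₁) / 12 * (3 * a ^ 2 + 4) := by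
      ring
    rw [he, hx₁C] at h5
    have h2D2 : (0:ℝ) ≤ 2 * D ^ 2 := by linarith [sq_nonneg D]
    linarith [h5, mul_le_mul_of_nonneg_left hx₁6 h2D2,
      mul_nonneg (sq_nonneg D) (sq_nonneg a), sq_nonneg D]
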